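/- In a zero-sum polymatrix game whose interaction graph is a star with center player 1, the Nash-equilibrium payoff of the center player is unique: it equals the value max over π_1 ∈ Δ(A_1) of min over (π_i)_{i≠1} ∈ Π_{i≠1} Δ(A_i) of Σ_{i≠1} π_1^T r_{1,i} π_i, and this max-min equals the corresponding min-max by the minimax theorem applied to the bilinear payoff on the compact convex sets Δ(A_1) and Π_{i≠1} Δ(A_i). -/
import Mathlib

theorem saddle_aux {ι κ : Type*} [Nonempty ι] [Nonempty κ] (f : ι → κ → ℝ) (B : ℝ)
    (hb : ∀ i k, |f i k| ≤ B) (i0 : ι) (k0 : κ)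
    (h1 : ∀ i, f i k0 ≤ f i0 k0) (h2 : ∀ k, f i0 k0 ≤ f i0 k) :
    f i0 k0 = (⨆ i, ⨅ k, f i k) ∧ (⨆ i, ⨅ k, f i k) = (⨅ k, ⨆ i, f i k) := by
  have hub : ∀ i k, f i k ≤ B := fun i k => (le_abs_self _).trans (hb i k)
  have hlb : ∀ i k, -B ≤ f i k := fun i k => neg_le_of_abs_le (hb i k)
  have hbb : ∀ i, BddBelow (Set.range fun k => f i k) :=
    fun i => ⟨-B, by rintro _ ⟨k, rfl⟩; exact hlb i k⟩
  have hba : ∀ k, BddAbove (Set.range fun i => f i k) :=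
    fun k => ⟨B, by rintro _ ⟨i, rfl⟩; exact hub i k⟩
  have hgba : BddAbove (Set.range fun i => ⨅ k, f i k) := by
    refine ⟨B, ?_⟩
    rintro _ ⟨i, rfl⟩
    exact (ciInf_le (hbb i) k0).trans (hub i k0)
  have hhbb : BddBelow (Set.range fun k => ⨆ i, f i k) := by
    refine ⟨-B, ?_⟩
    rintro _ ⟨k, rfl⟩
    exact (hlb i0 k).trans (le_ciSup (hba k) i0)
  have hsi_le : (⨆ i, ⨅ k, f i k) ≤ f i0 k0 :=
    ciSup_le fun i => (ciInf_le (hbb i) k0).trans (h1 i)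
  have hle_si : f i0 k0 ≤ (⨆ i, ⨅ k, f i k) :=
    (le_ciInf h2).trans (le_ciSup hgba i0)
  have his_le : (⨅ k, ⨆ i, f i k) ≤ f i0 k0 :=
    (ciInf_le hhbb k0).trans (ciSup_le h1)
  have hle_is : f i0 k0 ≤ (⨅ k, ⨆ i, f i k) :=
    le_ciInf fun k => (h2 k).trans (le_ciSup (hba k) i0)
  exact ⟨(le_antisymm hsi_le hle_si).symm,
     le_antisymm (hsi_le.trans hle_is) (his_le.trans hle_si)⟩


/-- In a zero-sum polymatrix game whose interaction graph is a star with center player `one`,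
the Nash-equilibrium payoff of the center is unique: it equals
`max_{π₁ ∈ Δ(A₁)} min_{(πᵢ)_{i≠1}} ∑_{i≠1} π₁ᵀ r_{1,i} πᵢ`, and this max-min equals the
corresponding min-max. -/
theorem star_zeroSum_center_value_unique {N : Type*} [Fintype N] [DecidableEq N] (one : N)
    (A : N → Type*) [∀ i, Fintype (A i)] [∀ i, Nonempty (A i)]
    (r1 : ∀ i, A one → A i → ℝ) (ri1 : ∀ i, A i → A one → ℝ)
    -- zero-sum over all product mixed-strategy profiles
    (hzs : ∀ π : ∀ i, A i → ℝ, (∀ i a, 0 ≤ π i a) → (∀ i, ∑ a, π i a = 1) →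
      ∑ i ∈ Finset.univ.erase one,
        ((∑ a1, ∑ ai, π one a1 * r1 i a1 ai * π i ai) +
         (∑ ai, ∑ a1, π i ai * ri1 i ai a1 * π one a1)) = 0)
    -- a Nash equilibrium π* (a product profile where no player can improve by deviating)
    (πs : ∀ i, A i → ℝ)
    (hπnn : ∀ i a, 0 ≤ πs i a) (hπsum : ∀ i, ∑ a, πs i a = 1)
    (hNEcenter : ∀ μ : A one → ℝ, (∀ a, 0 ≤ μ a) → (∑ a, μ a = 1) →
      (∑ i ∈ Finset.univ.erase one, ∑ a1, ∑ ai, μ a1 * r1 i a1 ai * πs i ai) ≤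
      (∑ i ∈ Finset.univ.erase one, ∑ a1, ∑ ai, πs one a1 * r1 i a1 ai * πs i ai))
    (hNEother : ∀ i, i ≠ one → ∀ μ : A i → ℝ, (∀ a, 0 ≤ μ a) → (∑ a, μ a = 1) →
      (∑ ai, ∑ a1, μ ai * ri1 i ai a1 * πs one a1) ≤
      (∑ ai, ∑ a1, πs i ai * ri1 i ai a1 * πs one a1)) :
    (∑ i ∈ Finset.univ.erase one, ∑ a1, ∑ ai, πs one a1 * r1 i a1 ai * πs i ai) =
      (⨆ μ1 : {p : A one → ℝ // p ∈ stdSimplex ℝ (A one)},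
        ⨅ ρ : ∀ j : {j : N // j ≠ one}, {p : A j.1 → ℝ // p ∈ stdSimplex ℝ (A j.1)},
          ∑ j : {j : N // j ≠ one}, ∑ a1, ∑ ai, μ1.1 a1 * r1 j.1 a1 ai * (ρ j).1 ai) ∧
    (⨆ μ1 : {p : A one → ℝ // p ∈ stdSimplex ℝ (A one)},
        ⨅ ρ : ∀ j : {j : N // j ≠ one}, {p : A j.1 → ℝ // p ∈ stdSimplex ℝ (A j.1)},
          ∑ j : {j : N // j ≠ one}, ∑ a1, ∑ ai, μ1.1 a1 * r1 j.1 a1 ai * (ρ j).1 ai) =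
    (⨅ ρ : ∀ j : {j : N // j ≠ one}, {p : A j.1 → ℝ // p ∈ stdSimplex ℝ (A j.1)},
        ⨆ μ1 : {p : A one → ℝ // p ∈ stdSimplex ℝ (A one)},
          ∑ j : {j : N // j ≠ one}, ∑ a1, ∑ ai, μ1.1 a1 * r1 j.1 a1 ai * (ρ j).1 ai) := by
  classical
  have hmem : ∀ i, πs i ∈ stdSimplex ℝ (A i) := fun i => ⟨hπnn i, hπsum i⟩
  haveI hne : ∀ i, Nonempty {p : A i → ℝ // p ∈ stdSimplex ℝ (A i)} :=
    fun i => ⟨⟨πs i, hmem i⟩⟩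
  set f : {p : A one → ℝ // p ∈ stdSimplex ℝ (A one)} →
      (∀ j : {j : N // j ≠ one}, {p : A j.1 → ℝ // p ∈ stdSimplex ℝ (A j.1)}) → ℝ :=
    fun μ1 ρ => ∑ j : {j : N // j ≠ one}, ∑ a1, ∑ ai, μ1.1 a1 * r1 j.1 a1 ai * (ρ j).1 ai
    with hf
  set i0 : {p : A one → ℝ // p ∈ stdSimplex ℝ (A one)} := ⟨πs one, hmem one⟩ with hi0
  set k0 : ∀ j : {j : N // j ≠ one}, {p : A j.1 → ℝ // p ∈ stdSimplex ℝ (A j.1)} :=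
    fun j => ⟨πs j.1, hmem j.1⟩ with hk0
  have hconv : ∀ g : N → ℝ, (∑ j : {j : N // j ≠ one}, g j.1) =
      ∑ i ∈ Finset.univ.erase one, g i :=
    fun g => (Finset.sum_subtype _ (by simp) g).symm
  have hle1 : ∀ (i : N) (p : A i → ℝ), p ∈ stdSimplex ℝ (A i) → ∀ a, p a ≤ 1 := by
    intro i p hp a
    rw [← hp.2]
    exact Finset.single_le_sum (fun b _ => hp.1 b) (Finset.mem_univ a)
  set B : ℝ := ∑ j : {j : N // j ≠ one}, ∑ a1, ∑ ai, |r1 j.1 a1 ai| with hB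
  have hb : ∀ μ1 ρ, |f μ1 ρ| ≤ B := by
    intro μ1 ρ
    calc |f μ1 ρ| ≤ ∑ j : {j : N // j ≠ one}, ∑ a1, ∑ ai,
        |μ1.1 a1 * r1 j.1 a1 ai * (ρ j).1 ai| := by
          refine (Finset.abs_sum_le_sum_abs _ _).trans (Finset.sum_le_sum fun j _ => ?_)
          refine (Finset.abs_sum_le_sum_abs _ _).trans (Finset.sum_le_sum fun a1 _ => ?_)
          exact Finset.abs_sum_le_sum_abs _ _
      _ ≤ B := by
          refine Finset.sum_le_sum fun j _ => Finset.sum_le_sum fun a1 _ =>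
            Finset.sum_le_sum fun ai _ => ?_
          rw [abs_mul, abs_mul, abs_of_nonneg (μ1.2.1 a1), abs_of_nonneg ((ρ j).2.1 ai)]
          have hx1 : μ1.1 a1 ≤ 1 := hle1 one μ1.1 μ1.2 a1
          have hy1 : (ρ j).1 ai ≤ 1 := hle1 j.1 (ρ j).1 (ρ j).2 ai
          have hy0 : (0:ℝ) ≤ (ρ j).1 ai := (ρ j).2.1 ai
          have hr0 : (0:ℝ) ≤ |r1 j.1 a1 ai| := abs_nonneg _
          calc μ1.1 a1 * |r1 j.1 a1 ai| * (ρ j).1 ai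
              ≤ 1 * |r1 j.1 a1 ai| * 1 :=
                mul_le_mul (mul_le_mul_of_nonneg_right hx1 hr0) hy1 hy0 (by positivity)
            _ = |r1 j.1 a1 ai| := by ring
  -- h1: center best response
  have h1 : ∀ μ1, f μ1 k0 ≤ f i0 k0 := by
    intro μ1
    calc f μ1 k0
        = ∑ i ∈ Finset.univ.erase one, ∑ a1, ∑ ai, μ1.1 a1 * r1 i a1 ai * πs i ai :=
          hconv (fun i => ∑ a1, ∑ ai, μ1.1 a1 * r1 i a1 ai * πs i ai)
      _ ≤ ∑ i ∈ Finset.univ.erase one, ∑ a1, ∑ ai, πs one a1 * r1 i a1 ai * πs i ai :=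
          hNEcenter μ1.1 μ1.2.1 μ1.2.2
      _ = f i0 k0 :=
          (hconv (fun i => ∑ a1, ∑ ai, πs one a1 * r1 i a1 ai * πs i ai)).symm
  -- key zero-sum identity
  have key : ∀ ρ : ∀ j : {j : N // j ≠ one}, {p : A j.1 → ℝ // p ∈ stdSimplex ℝ (A j.1)},
      f i0 ρ = -∑ j : {j : N // j ≠ one}, ∑ ai, ∑ a1,
        (ρ j).1 ai * ri1 j.1 ai a1 * πs one a1 := by
    intro ρ
    set π : ∀ i, A i → ℝ := fun i =>
      if h : i ≠ one then (ρ ⟨i, h⟩).1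
      else fun a => πs one (cast (congrArg A (not_not.mp h)) a) with hπ
    have hπone : π one = πs one := by
      funext a
      rw [hπ]
      simp only [ne_eq, not_true_eq_false, dite_false]
      rw [cast_eq]
    have hπother : ∀ (i) (h : i ≠ one), π i = (ρ ⟨i, h⟩).1 := by
      intro i h
      rw [hπ]
      simp only [ne_eq, h, not_false_eq_true, dite_true]
    have hnn : ∀ i a, 0 ≤ π i a := by
      intro i a
      rw [hπ]
      dsimp only
      split
      · rename_i h
        exact (ρ ⟨i, h⟩).2.1 a
      · exact hπnn one _
    have hsum : ∀ i, ∑ a, π i a = 1 := by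
      intro i
      rw [hπ]
      dsimp only
      split
      · rename_i h
        exact (ρ ⟨i, h⟩).2.2
      · rename_i h
        rw [← hπsum one]
        exact Fintype.sum_equiv (Equiv.cast (congrArg A (not_not.mp h))) _ _ (fun a => rfl)
    have hz := hzs π hnn hsum
    have hz' : (∑ j : {j : N // j ≠ one},
        ((∑ a1, ∑ ai, π one a1 * r1 j.1 a1 ai * π j.1 ai) +
         (∑ ai, ∑ a1, π j.1 ai * ri1 j.1 ai a1 * π one a1))) = 0 :=
      (hconv (fun i => (∑ a1, ∑ ai, π one a1 * r1 i a1 ai * π i ai) +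
        (∑ ai, ∑ a1, π i ai * ri1 i ai a1 * π one a1))).trans hz
    rw [Finset.sum_add_distrib] at hz'
    have e1 : (∑ j : {j : N // j ≠ one}, ∑ a1, ∑ ai, π one a1 * r1 j.1 a1 ai * π j.1 ai)
        = ∑ j : {j : N // j ≠ one}, ∑ a1, ∑ ai, πs one a1 * r1 j.1 a1 ai * (ρ j).1 ai := by
      refine Finset.sum_congr rfl fun j _ => ?_
      rw [hπone, hπother j.1 j.2]
    have e2 : (∑ j : {j : N // j ≠ one}, ∑ ai, ∑ a1, π j.1 ai * ri1 j.1 ai a1 * π one a1)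
        = ∑ j : {j : N // j ≠ one}, ∑ ai, ∑ a1, (ρ j).1 ai * ri1 j.1 ai a1 * πs one a1 := by
      refine Finset.sum_congr rfl fun j _ => ?_
      rw [hπone, hπother j.1 j.2]
    rw [e1, e2] at hz'
    have e3 : f i0 ρ
        = ∑ j : {j : N // j ≠ one}, ∑ a1, ∑ ai, πs one a1 * r1 j.1 a1 ai * (ρ j).1 ai := rfl
    rw [e3]
    linarith
  -- h2
  have h2 : ∀ ρ, f i0 k0 ≤ f i0 ρ := by
    intro ρ
    rw [key ρ, key k0]
    have hle : (∑ j : {j : N // j ≠ one}, ∑ ai, ∑ a1,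
          (ρ j).1 ai * ri1 j.1 ai a1 * πs one a1)
        ≤ ∑ j : {j : N // j ≠ one}, ∑ ai, ∑ a1,
          (k0 j).1 ai * ri1 j.1 ai a1 * πs one a1 :=
      Finset.sum_le_sum fun j _ => hNEother j.1 j.2 (ρ j).1 (ρ j).2.1 (ρ j).2.2
    linarith
  obtain ⟨hA, hB2⟩ := saddle_aux f B hb i0 k0 h1 h2
  have e0 : f i0 k0 = ∑ i ∈ Finset.univ.erase one,
      ∑ a1, ∑ ai, πs one a1 * r1 i a1 ai * πs i ai :=
    hconv (fun i => ∑ a1, ∑ ai, πs one a1 * r1 i a1 ai * πs i ai)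
  exact ⟨e0 ▸ hA, hB2⟩
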